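/- Vanishing-order decay of the weighted L² norm (Lemma on H(τ)): let v : ℝⁿ × (-T,∞) → ℝ satisfy |v(x,t)| ≤ B₀ e^{A|x|²} for t ∈ [-T₀,0], and suppose |v(x,t)| ≤ C₀(|x|^{2K} + |t|^K) whenever |x|² + |t| ≤ T₁, where K is a positive integer. Then there is T₀ = ½ min{log(1+1/(8(A+π))), T₁} and a constant C₁ depending on n, K, B₀, C₀ such that for all 0 < τ < T₀, ∫_{ℝⁿ} v(x,-τ)² M(x,-τ) dγ(x) ≤ C₁ τ^{2K}. -/

import Mathlib

open MeasureTheory Real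

noncomputable def gaussDensity (n : ℕ) (x : EuclideanSpace ℝ (Fin n)) : ℝ :=
  (2 * Real.pi) ^ (-(n : ℝ) / 2) * Real.exp (-‖x‖ ^ 2 / 2)

noncomputable def backwardMehler (n : ℕ) (x : EuclideanSpace ℝ (Fin n)) (t : ℝ) : ℝ :=
  (1 - Real.exp (2 * t)) ^ (-(n : ℝ) / 2) *
    Real.exp (-(1 / 2) * (Real.exp (2 * t) * ‖x‖ ^ 2) / (1 - Real.exp (2 * t)))

lemma aux_pow_mul_exp_neg {t : ℝ} (ht : 0 ≤ t) (m : ℕ) :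
    t ^ m * Real.exp (-t) ≤ (Nat.factorial m : ℝ) := by
  have h := Real.pow_div_factorial_le_exp t ht m
  have hm : (0:ℝ) < (Nat.factorial m : ℝ) := by positivity
  have he : (0:ℝ) < Real.exp t := Real.exp_pos t
  rw [div_le_iff₀ hm] at h
  rw [Real.exp_neg]
  rw [mul_inv_le_iff₀ he]
  linarith [h]

lemma aux_integrable_gauss (n : ℕ) {c : ℝ} (hc : 0 < c) :
    Integrable (fun x : EuclideanSpace ℝ (Fin n) => Real.exp (-(c * ‖x‖ ^ 2))) := by
  have h := GaussianFourier.integrable_cexp_neg_mul_sq_norm_add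
    (V := EuclideanSpace ℝ (Fin n)) (b := (c : ℂ)) (by simpa using hc) 0 0
  have := h.norm
  refine this.congr (Filter.Eventually.of_forall fun x => ?_)
  simp only [Complex.norm_exp]
  norm_num
  left
  norm_cast

lemma aux_integral_le (n : ℕ) {c Q : ℝ} (hc : 0 < c) (hQ : 0 ≤ Q)
    (f : EuclideanSpace ℝ (Fin n) → ℝ) (hf0 : ∀ x, 0 ≤ f x)
    (hfg : ∀ x, f x ≤ Q * Real.exp (-(c * ‖x‖ ^ 2))) :
    (∫ x, f x) ≤ Q * (Real.pi / c) ^ ((n : ℝ) / 2) := by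
  have hint : Integrable (fun x : EuclideanSpace ℝ (Fin n) => Q * Real.exp (-(c * ‖x‖ ^ 2))) :=
    (aux_integrable_gauss n hc).const_mul Q
  have h := integral_mono_of_nonneg (Filter.Eventually.of_forall hf0) hint
    (Filter.Eventually.of_forall hfg)
  refine h.trans ?_
  rw [integral_const_mul]
  have : ∫ x : EuclideanSpace ℝ (Fin n), Real.exp (-(c * ‖x‖ ^ 2))
      = (Real.pi / c) ^ ((n : ℝ) / 2) := by
    have := GaussianFourier.integral_rexp_neg_mul_sq_norm (V := EuclideanSpace ℝ (Fin n)) hc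
    simp only [neg_mul] at this ⊢
    rw [this, finrank_euclideanSpace_fin]
  rw [this]

lemma aux_ptwise_small {δ C₀ τ r w : ℝ} (K : ℕ) (hδ : 0 < δ) (hr : 0 ≤ r) (hτ0 : 0 ≤ τ)
    (hw : |w| ≤ C₀ * (r ^ K + τ ^ K)) :
    w ^ 2 * (Real.exp (-(δ * r) / 2) * Real.exp (-r / 2)) ≤
      (2 * C₀ ^ 2 * ((Nat.factorial (2 * K) : ℝ) * (8 / δ) ^ (2 * K) + τ ^ (2 * K))) *
        Real.exp (-(δ / 8 * r)) := by
  have hrK : r ^ (2 * K) = (r ^ K) ^ 2 := by rw [mul_comm, pow_mul]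
  have hτK : τ ^ (2 * K) = (τ ^ K) ^ 2 := by rw [mul_comm, pow_mul]
  have h1 : w ^ 2 ≤ 2 * C₀ ^ 2 * (r ^ (2 * K) + τ ^ (2 * K)) := by
    have h2 : |w| * |w| ≤ (C₀ * (r ^ K + τ ^ K)) * (C₀ * (r ^ K + τ ^ K)) :=
      mul_le_mul hw hw (abs_nonneg w) ((abs_nonneg w).trans hw)
    rw [abs_mul_abs_self] at h2
    rw [hrK, hτK]
    nlinarith [sq_nonneg (r ^ K - τ ^ K), sq_nonneg w]
  -- r^{2K} ≤ (2K)! (8/δ)^{2K} exp(δ/8 r)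
  have ht : 0 ≤ δ / 8 * r := by positivity
  have h3 : r ^ (2 * K) ≤ (Nat.factorial (2 * K) : ℝ) * (8 / δ) ^ (2 * K)
      * Real.exp (δ / 8 * r) := by
    have haux := aux_pow_mul_exp_neg ht (2 * K)
    have hid : r ^ (2 * K) = (8 / δ) ^ (2 * K) * ((δ / 8 * r) ^ (2 * K)) := by
      rw [← mul_pow]
      congr 1
      field_simp
    have h4 : (δ / 8 * r) ^ (2 * K) ≤ (Nat.factorial (2 * K) : ℝ) * Real.exp (δ / 8 * r) := by
      have he : (δ / 8 * r) ^ (2 * K) =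
          ((δ / 8 * r) ^ (2 * K) * Real.exp (-(δ / 8 * r))) * Real.exp (δ / 8 * r) := by
        rw [mul_assoc, ← Real.exp_add]
        simp
      rw [he]
      exact mul_le_mul_of_nonneg_right haux (Real.exp_pos _).le
    calc r ^ (2 * K) = (8 / δ) ^ (2 * K) * ((δ / 8 * r) ^ (2 * K)) := hid
      _ ≤ (8 / δ) ^ (2 * K) * ((Nat.factorial (2 * K) : ℝ) * Real.exp (δ / 8 * r)) := by
          exact mul_le_mul_of_nonneg_left h4 (by positivity)
      _ = (Nat.factorial (2 * K) : ℝ) * (8 / δ) ^ (2 * K) * Real.exp (δ / 8 * r) := by ring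
  have hE1 : Real.exp (-(δ * r) / 2) * Real.exp (-r / 2) ≤ Real.exp (-(δ / 8 * r)) := by
    rw [← Real.exp_add]
    apply Real.exp_le_exp.mpr
    nlinarith [mul_nonneg hδ.le hr]
  have hE2 : Real.exp (δ / 8 * r) * (Real.exp (-(δ * r) / 2) * Real.exp (-r / 2))
      ≤ Real.exp (-(δ / 8 * r)) := by
    rw [← Real.exp_add, ← Real.exp_add]
    apply Real.exp_le_exp.mpr
    nlinarith [mul_nonneg hδ.le hr]
  have hW : 0 ≤ Real.exp (-(δ * r) / 2) * Real.exp (-r / 2) := by positivity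
  calc w ^ 2 * (Real.exp (-(δ * r) / 2) * Real.exp (-r / 2))
      ≤ (2 * C₀ ^ 2 * (r ^ (2 * K) + τ ^ (2 * K))) *
        (Real.exp (-(δ * r) / 2) * Real.exp (-r / 2)) := mul_le_mul_of_nonneg_right h1 hW
    _ = 2 * C₀ ^ 2 * (r ^ (2 * K) * (Real.exp (-(δ * r) / 2) * Real.exp (-r / 2)))
        + 2 * C₀ ^ 2 * (τ ^ (2 * K) * (Real.exp (-(δ * r) / 2) * Real.exp (-r / 2))) := by ring
    _ ≤ 2 * C₀ ^ 2 * ((Nat.factorial (2 * K) : ℝ) * (8 / δ) ^ (2 * K) * Real.exp (-(δ / 8 * r)))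
        + 2 * C₀ ^ 2 * (τ ^ (2 * K) * Real.exp (-(δ / 8 * r))) := by
        have t1 : r ^ (2 * K) * (Real.exp (-(δ * r) / 2) * Real.exp (-r / 2))
            ≤ (Nat.factorial (2 * K) : ℝ) * (8 / δ) ^ (2 * K) * Real.exp (-(δ / 8 * r)) := by
          calc r ^ (2 * K) * (Real.exp (-(δ * r) / 2) * Real.exp (-r / 2))
              ≤ ((Nat.factorial (2 * K) : ℝ) * (8 / δ) ^ (2 * K) * Real.exp (δ / 8 * r)) *
                (Real.exp (-(δ * r) / 2) * Real.exp (-r / 2)) :=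
                mul_le_mul_of_nonneg_right h3 hW
            _ = (Nat.factorial (2 * K) : ℝ) * (8 / δ) ^ (2 * K) *
                (Real.exp (δ / 8 * r) * (Real.exp (-(δ * r) / 2) * Real.exp (-r / 2))) := by ring
            _ ≤ (Nat.factorial (2 * K) : ℝ) * (8 / δ) ^ (2 * K) * Real.exp (-(δ / 8 * r)) := by
                apply mul_le_mul_of_nonneg_left hE2 (by positivity)
        have t2 : τ ^ (2 * K) * (Real.exp (-(δ * r) / 2) * Real.exp (-r / 2))
            ≤ τ ^ (2 * K) * Real.exp (-(δ / 8 * r)) :=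
          mul_le_mul_of_nonneg_left hE1 (by positivity)
        have hc2 : (0:ℝ) ≤ 2 * C₀ ^ 2 := by positivity
        have := mul_le_mul_of_nonneg_left t1 hc2
        have := mul_le_mul_of_nonneg_left t2 hc2
        linarith
    _ = (2 * C₀ ^ 2 * ((Nat.factorial (2 * K) : ℝ) * (8 / δ) ^ (2 * K) + τ ^ (2 * K))) *
        Real.exp (-(δ / 8 * r)) := by ring

lemma aux_ptwise_big {δ A B₀ r w : ℝ} (hδ : 0 < δ) (hr : 0 ≤ r) (hB : 0 ≤ B₀)
    (h2A : 2 * A ≤ δ / 4) (hw : |w| ≤ B₀ * Real.exp (A * r)) :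
    w ^ 2 * (Real.exp (-(δ * r) / 2) * Real.exp (-r / 2)) ≤
      B₀ ^ 2 * (Real.exp (-(δ / 8 * r)) * Real.exp (-(δ / 8 * r))) := by
  have h1 : w ^ 2 ≤ B₀ ^ 2 * Real.exp (2 * A * r) := by
    have h2 : |w| * |w| ≤ (B₀ * Real.exp (A * r)) * (B₀ * Real.exp (A * r)) :=
      mul_le_mul hw hw (abs_nonneg w) ((abs_nonneg w).trans hw)
    rw [abs_mul_abs_self] at h2
    have h3 : Real.exp (2 * A * r) = Real.exp (A * r) * Real.exp (A * r) := by
      rw [← Real.exp_add]; ring_nf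
    rw [h3]
    nlinarith [Real.exp_pos (A * r)]
  have hE : Real.exp (2 * A * r) * (Real.exp (-(δ * r) / 2) * Real.exp (-r / 2))
      ≤ Real.exp (-(δ / 8 * r)) * Real.exp (-(δ / 8 * r)) := by
    rw [← Real.exp_add, ← Real.exp_add, ← Real.exp_add]
    apply Real.exp_le_exp.mpr
    nlinarith [mul_nonneg (sub_nonneg.2 h2A) hr]
  calc w ^ 2 * (Real.exp (-(δ * r) / 2) * Real.exp (-r / 2))
      ≤ (B₀ ^ 2 * Real.exp (2 * A * r)) * (Real.exp (-(δ * r) / 2) * Real.exp (-r / 2)) :=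
        mul_le_mul_of_nonneg_right h1 (by positivity)
    _ = B₀ ^ 2 * (Real.exp (2 * A * r) * (Real.exp (-(δ * r) / 2) * Real.exp (-r / 2))) := by ring
    _ ≤ B₀ ^ 2 * (Real.exp (-(δ / 8 * r)) * Real.exp (-(δ / 8 * r))) :=
        mul_le_mul_of_nonneg_left hE (by positivity)

set_option maxHeartbeats 2000000 in
theorem vanishing_order_H_bound (n : ℕ) (T T₁ A B₀ C₀ : ℝ) (K : ℕ)
    (hT : 0 < T) (hT₁ : 0 < T₁) (hT₁T : T₁ < T) (hA : 0 < A) (hB : 0 < B₀)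
    (hC₀ : 0 < C₀) (hK : 0 < K)
    (v : EuclideanSpace ℝ (Fin n) → ℝ → ℝ)
    (hgrowth : ∀ x, ∀ t ∈ Set.Icc (-(1 / 2 * min (Real.log (1 + 1 / (8 * (A + Real.pi)))) T₁)) 0,
      |v x t| ≤ B₀ * Real.exp (A * ‖x‖ ^ 2))
    (hvanish : ∀ x t, ‖x‖ ^ 2 + |t| ≤ T₁ → |v x t| ≤ C₀ * (‖x‖ ^ (2 * K) + |t| ^ K)) :
    ∃ C₁ > 0, ∀ τ : ℝ, 0 < τ →
      τ < 1 / 2 * min (Real.log (1 + 1 / (8 * (A + Real.pi)))) T₁ →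
      (∫ x, v x (-τ) ^ 2 * backwardMehler n x (-τ) * gaussDensity n x) ≤
        C₁ * τ ^ (2 * K) := by
  have hπ := Real.pi_pos
  have h8A : (0:ℝ) < 8 * (A + Real.pi) := by positivity
  set L := Real.log (1 + 1 / (8 * (A + Real.pi))) with hLdef
  set ε : ℝ := 1 / (8 * (A + Real.pi)) with hεdef
  have hεpos : 0 < ε := by positivity
  have hε1 : ε ≤ 1 := by
    rw [hεdef, div_le_one h8A]
    nlinarith only [Real.pi_gt_three, hA]
  have hLε : L ≤ ε := by
    have h := Real.log_le_sub_one_of_pos (show (0:ℝ) < 1 + ε by linarith)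
    simpa using h
  set Cn : ℝ := (4 * Real.exp 1) ^ n with hCndef
  have hCnpos : 0 < Cn := by positivity
  set Ca : ℝ := Cn * (2 * C₀ ^ 2 * ((Nat.factorial (2 * K) : ℝ) * 128 ^ (2 * K) + 1)
      + B₀ ^ 2 * (Nat.factorial (4 * K) : ℝ) * 128 ^ (4 * K)) with hCadef
  set Cb : ℝ := Cn * B₀ ^ 2 * (4 / T₁ ^ 2) ^ (2 * K) with hCbdef
  have hCa0 : 0 ≤ Ca := by
    rw [hCadef]; positivity
  have hCb0 : 0 < Cb := by
    rw [hCbdef]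
    have : (0:ℝ) < 4 / T₁ ^ 2 := by positivity
    positivity
  refine ⟨Ca + Cb, by linarith only [hCa0, hCb0], fun τ hτ0 hτT0 => ?_⟩
  have hτL : 2 * τ < L := by
    have h := min_le_left L T₁
    linarith only [h, hτT0]
  have hτhalf : 2 * τ < 1 := by
    calc 2 * τ < L := hτL
      _ ≤ ε := hLε
      _ ≤ 1 := hε1
  have hτ1 : τ ≤ 1 := by linarith only [hτhalf, hτ0]
  set E := Real.exp (2 * τ) with hEdef
  have hE1 : 1 < E := by
    rw [hEdef, show (1:ℝ) = Real.exp 0 from (Real.exp_zero).symm]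
    exact Real.exp_lt_exp.mpr (by linarith only [hτ0])
  have hE1' : 0 < E - 1 := by linarith only [hE1]
  set δ : ℝ := (E - 1)⁻¹ with hδdef
  have hδpos : 0 < δ := inv_pos.mpr hE1'
  have hδA : 8 * (A + Real.pi) < δ := by
    have h2 : E < 1 + ε := by
      rw [hEdef]
      calc Real.exp (2 * τ) < Real.exp L := Real.exp_lt_exp.mpr hτL
        _ = 1 + ε := by rw [hLdef]; exact Real.exp_log (by linarith only [hεpos])
    have h3 : E - 1 < ε := by linarith only [h2]
    have h4 : 1 / ε < 1 / (E - 1) := one_div_lt_one_div_of_lt hE1' h3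
    rw [hεdef, one_div_one_div] at h4
    rw [hδdef, ← one_div]
    exact h4
  have hE3 : E ≤ 3 := by
    rw [hEdef]
    calc Real.exp (2 * τ) ≤ Real.exp 1 := Real.exp_le_exp.mpr (by linarith only [hτhalf])
      _ ≤ 3 := by linarith only [Real.exp_one_lt_d9]
  have hEpos0 : 0 < E := by linarith only [hE1]
  have hE16 : E - 1 ≤ 16 * τ := by
    have h1 : 1 - 2 * τ ≤ Real.exp (-(2 * τ)) := by
      have := Real.add_one_le_exp (-(2 * τ)); linarith only [this]
    have h2 : E * Real.exp (-(2 * τ)) = 1 := by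
      rw [hEdef, ← Real.exp_add]; norm_num
    have h4 : E * (1 - 2 * τ) ≤ 1 := by
      calc E * (1 - 2 * τ) ≤ E * Real.exp (-(2 * τ)) :=
            mul_le_mul_of_nonneg_left h1 hEpos0.le
        _ = 1 := h2
    have h5 : 2 * τ * E ≤ 2 * τ * 3 :=
      mul_le_mul_of_nonneg_left hE3 (by linarith only [hτ0])
    linarith only [h4, h5, hτ0]
  have hδ16 : (16 * τ)⁻¹ ≤ δ := by
    rw [hδdef]
    exact inv_anti₀ hE1' hE16
  have hδinv : δ⁻¹ ≤ 16 * τ := by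
    rw [hδdef, inv_inv]; linarith only [hE16]
  have h8δ : 8 / δ ≤ 128 * τ := by
    rw [div_eq_mul_inv]; linarith only [hδinv]
  have h16τδ : 1 ≤ 16 * τ * δ := by
    have h := mul_le_mul_of_nonneg_left hδ16 (show (0:ℝ) ≤ 16 * τ by positivity)
    rwa [mul_inv_cancel₀ (by positivity)] at h
  -- Mehler rewriting
  have hexpneg : Real.exp (2 * -τ) = E⁻¹ := by
    rw [hEdef, ← Real.exp_neg]
    congr 1
    ring
  set a : ℝ := 1 - Real.exp (2 * -τ) with hadef
  have hEinv1 : E⁻¹ < 1 := inv_lt_one_of_one_lt₀ hE1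
  have ha0 : 0 < a := by rw [hadef, hexpneg]; linarith only [hEinv1]
  have haδ : Real.exp (2 * -τ) / a = δ := by
    rw [hadef, hexpneg, hδdef]
    have h1 : 1 - E⁻¹ = (E - 1) / E := by field_simp
    rw [h1, div_div_eq_mul_div, inv_mul_cancel₀ hEpos0.ne', one_div]
  set P : ℝ := a ^ (-(n:ℝ)/2) * (2 * Real.pi) ^ (-(n:ℝ)/2) with hPdef
  have hPpos : 0 < P :=
    mul_pos (Real.rpow_pos_of_pos ha0 _) (Real.rpow_pos_of_pos (by positivity) _)
  have hM : ∀ x : EuclideanSpace ℝ (Fin n), backwardMehler n x (-τ)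
      = a ^ (-(n:ℝ)/2) * Real.exp (-(δ * ‖x‖ ^ 2) / 2) := by
    intro x
    have harg : -(1 / 2) * (Real.exp (2 * -τ) * ‖x‖ ^ 2) / (1 - Real.exp (2 * -τ))
        = -(δ * ‖x‖ ^ 2) / 2 := by
      rw [← haδ, ← hadef]
      field_simp [ha0.ne']
    rw [backwardMehler, harg, ← hadef]
  have hf_eq : ∀ x : EuclideanSpace ℝ (Fin n),
      v x (-τ) ^ 2 * backwardMehler n x (-τ) * gaussDensity n x
      = (v x (-τ) ^ 2 * (Real.exp (-(δ * ‖x‖ ^ 2) / 2) * Real.exp (-‖x‖ ^ 2 / 2))) * P := by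
    intro x
    rw [hM x, gaussDensity, hPdef]
    ring
  have hf0 : ∀ x : EuclideanSpace ℝ (Fin n),
      0 ≤ v x (-τ) ^ 2 * backwardMehler n x (-τ) * gaussDensity n x := by
    intro x
    rw [hf_eq x]
    exact mul_nonneg (mul_nonneg (sq_nonneg _) (by positivity)) hPpos.le
  -- key quantity: P * (π / (δ/8))^{n/2} ≤ Cn
  have hPint : P * (Real.pi / (δ / 8)) ^ ((n:ℝ)/2) ≤ Cn := by
    have hδa : δ * a = E⁻¹ := by
      rw [← haδ, hexpneg]
      field_simp [ha0.ne']
    have hbase : (Real.pi / (δ / 8)) / (a * (2 * Real.pi)) = 4 * E := by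
      have h1 : (Real.pi / (δ / 8)) / (a * (2 * Real.pi)) = 4 / (δ * a) := by
        field_simp
        ring
      rw [h1, hδa, div_eq_mul_inv, inv_inv]
    have hkey : P * (Real.pi / (δ / 8)) ^ ((n:ℝ)/2) = (4 * E) ^ ((n:ℝ)/2) := by
      have h2 : (0:ℝ) < a ^ ((n:ℝ)/2) := Real.rpow_pos_of_pos ha0 _
      have h3 : (0:ℝ) < (2 * Real.pi) ^ ((n:ℝ)/2) := Real.rpow_pos_of_pos (by positivity) _
      have e1 : ((Real.pi / (δ / 8)) / (a * (2 * Real.pi))) ^ ((n:ℝ)/2)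
          = (Real.pi / (δ / 8)) ^ ((n:ℝ)/2)
            / (a ^ ((n:ℝ)/2) * (2 * Real.pi) ^ ((n:ℝ)/2)) := by
        rw [Real.div_rpow (by positivity) (by positivity),
          Real.mul_rpow ha0.le (by positivity)]
      rw [← hbase, e1, hPdef, show -(n:ℝ)/2 = -((n:ℝ)/2) by ring,
        Real.rpow_neg ha0.le, Real.rpow_neg (by positivity : (0:ℝ) ≤ 2 * Real.pi)]
      field_simp
    rw [hkey, hCndef]
    have h4 : (4 * E) ^ ((n:ℝ)/2) ≤ (4 * Real.exp 1) ^ ((n:ℝ)/2) := by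
      apply Real.rpow_le_rpow (by positivity) _ (by positivity)
      have : E ≤ Real.exp 1 := by
        rw [hEdef]; exact Real.exp_le_exp.mpr (by linarith only [hτhalf])
      linarith only [this]
    have h5 : (4 * Real.exp 1) ^ ((n:ℝ)/2) ≤ (4 * Real.exp 1) ^ ((n:ℝ)) := by
      apply Real.rpow_le_rpow_of_exponent_le
      · linarith only [Real.exp_one_gt_d9]
      · have : (0:ℝ) ≤ (n:ℝ) := Nat.cast_nonneg n
        linarith only [this]
    calc (4 * E) ^ ((n:ℝ)/2) ≤ (4 * Real.exp 1) ^ ((n:ℝ)/2) := h4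
      _ ≤ (4 * Real.exp 1) ^ ((n:ℝ)) := h5
      _ = (4 * Real.exp 1) ^ n := by rw [Real.rpow_natCast]
  have hsq : Real.sqrt τ * Real.sqrt τ = τ := Real.mul_self_sqrt hτ0.le
  have hst : 0 < Real.sqrt τ := Real.sqrt_pos.mpr hτ0
  by_cases hreg : Real.sqrt τ + τ ≤ T₁
  · -- small-τ regime
    set Qs : ℝ := 2 * C₀ ^ 2 * ((Nat.factorial (2 * K) : ℝ) * (8 / δ) ^ (2 * K) + τ ^ (2 * K))
        + B₀ ^ 2 * Real.exp (-(δ * Real.sqrt τ) / 8) with hQsdef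
    have h8δ0 : (0:ℝ) ≤ 8 / δ := by positivity
    have hQs0 : 0 ≤ Qs := by
      rw [hQsdef]
      positivity
    have hpt : ∀ x : EuclideanSpace ℝ (Fin n),
        v x (-τ) ^ 2 * backwardMehler n x (-τ) * gaussDensity n x
        ≤ (P * Qs) * Real.exp (-(δ / 8 * ‖x‖ ^ 2)) := by
      intro x
      rw [hf_eq x]
      have hr0 : (0:ℝ) ≤ ‖x‖ ^ 2 := by positivity
      have key : v x (-τ) ^ 2 * (Real.exp (-(δ * ‖x‖ ^ 2) / 2) * Real.exp (-‖x‖ ^ 2 / 2))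
          ≤ Qs * Real.exp (-(δ / 8 * ‖x‖ ^ 2)) := by
        by_cases hx : ‖x‖ ^ 2 ≤ Real.sqrt τ
        · have hv := hvanish x (-τ)
            (by rw [abs_neg, abs_of_pos hτ0]; linarith only [hx, hreg])
          rw [abs_neg, abs_of_pos hτ0] at hv
          have hnorm : ‖x‖ ^ (2 * K) = (‖x‖ ^ 2) ^ K := pow_mul ‖x‖ 2 K
          rw [hnorm] at hv
          have h := aux_ptwise_small K hδpos hr0 hτ0.le hv
          refine h.trans ?_
          rw [hQsdef]
          have he0 : (0:ℝ) < Real.exp (-(δ / 8 * ‖x‖ ^ 2)) := Real.exp_pos _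
          have hB2R : (0:ℝ) ≤ B₀ ^ 2 * Real.exp (-(δ * Real.sqrt τ) / 8) := by positivity
          linarith only [mul_nonneg hB2R he0.le]
        · push_neg at hx
          have hmem : -τ ∈ Set.Icc (-(1 / 2 * min L T₁)) 0 := by
            constructor
            · linarith only [hτT0]
            · linarith only [hτ0]
          have hv := hgrowth x (-τ) hmem
          have h2A : 2 * A ≤ δ / 4 := by linarith only [hδA, hπ, hA]
          have h := aux_ptwise_big hδpos hr0 hB.le h2A hv
          refine h.trans ?_
          have h5 : Real.exp (-(δ / 8 * ‖x‖ ^ 2)) ≤ Real.exp (-(δ * Real.sqrt τ) / 8) := by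
            apply Real.exp_le_exp.mpr
            have := mul_le_mul_of_nonneg_left hx.le hδpos.le
            linarith only [this]
          have he0 : (0:ℝ) < Real.exp (-(δ / 8 * ‖x‖ ^ 2)) := Real.exp_pos _
          have hQ1 : (0:ℝ) ≤ 2 * C₀ ^ 2 *
              ((Nat.factorial (2 * K) : ℝ) * (8 / δ) ^ (2 * K) + τ ^ (2 * K)) := by positivity
          calc B₀ ^ 2 * (Real.exp (-(δ / 8 * ‖x‖ ^ 2)) * Real.exp (-(δ / 8 * ‖x‖ ^ 2)))
              ≤ B₀ ^ 2 * (Real.exp (-(δ * Real.sqrt τ) / 8) * Real.exp (-(δ / 8 * ‖x‖ ^ 2))) := by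
                apply mul_le_mul_of_nonneg_left _ (by positivity)
                exact mul_le_mul_of_nonneg_right h5 he0.le
            _ ≤ Qs * Real.exp (-(δ / 8 * ‖x‖ ^ 2)) := by
                rw [hQsdef]; linarith only [mul_nonneg hQ1 he0.le]
      calc (v x (-τ) ^ 2 * (Real.exp (-(δ * ‖x‖ ^ 2) / 2) * Real.exp (-‖x‖ ^ 2 / 2))) * P
          ≤ (Qs * Real.exp (-(δ / 8 * ‖x‖ ^ 2))) * P := mul_le_mul_of_nonneg_right key hPpos.le
        _ = (P * Qs) * Real.exp (-(δ / 8 * ‖x‖ ^ 2)) := by ring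
    have hint := aux_integral_le n (c := δ / 8) (by positivity)
      (mul_nonneg hPpos.le hQs0) _ hf0 hpt
    -- bound Qs by τ^{2K}
    have hF_le : (Nat.factorial (2 * K) : ℝ) * (8 / δ) ^ (2 * K)
        ≤ (Nat.factorial (2 * K) : ℝ) * 128 ^ (2 * K) * τ ^ (2 * K) := by
      have h1 : (8 / δ) ^ (2 * K) ≤ (128 * τ) ^ (2 * K) := pow_le_pow_left₀ h8δ0 h8δ _
      calc (Nat.factorial (2 * K) : ℝ) * (8 / δ) ^ (2 * K)
          ≤ (Nat.factorial (2 * K) : ℝ) * (128 * τ) ^ (2 * K) :=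
            mul_le_mul_of_nonneg_left h1 (by positivity)
        _ = (Nat.factorial (2 * K) : ℝ) * 128 ^ (2 * K) * τ ^ (2 * K) := by rw [mul_pow]; ring
    have hR_le : Real.exp (-(δ * Real.sqrt τ) / 8)
        ≤ (Nat.factorial (4 * K) : ℝ) * 128 ^ (4 * K) * τ ^ (2 * K) := by
      set t : ℝ := δ * Real.sqrt τ / 8 with htdef
      have ht0 : 0 < t := by rw [htdef]; positivity
      have haux := aux_pow_mul_exp_neg ht0.le (4 * K)
      have h1 : Real.exp (-t) ≤ (Nat.factorial (4 * K) : ℝ) / t ^ (4 * K) := by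
        rw [le_div_iff₀ (pow_pos ht0 _)]
        calc Real.exp (-t) * t ^ (4 * K) = t ^ (4 * K) * Real.exp (-t) := by ring
          _ ≤ (Nat.factorial (4 * K) : ℝ) := haux
      have h1t : 1 / t ≤ 128 * Real.sqrt τ := by
        rw [div_le_iff₀ ht0, htdef]
        have hsqδ : Real.sqrt τ * Real.sqrt τ * δ = τ * δ := by rw [hsq]
        nlinarith only [h16τδ, hsqδ]
      have h2 : (Nat.factorial (4 * K) : ℝ) / t ^ (4 * K)
          ≤ (Nat.factorial (4 * K) : ℝ) * (128 * Real.sqrt τ) ^ (4 * K) := by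
        rw [div_eq_mul_inv, ← inv_pow, ← one_div]
        exact mul_le_mul_of_nonneg_left (pow_le_pow_left₀ (by positivity) h1t _) (by positivity)
      have h3 : (128 * Real.sqrt τ) ^ (4 * K) = 128 ^ (4 * K) * τ ^ (2 * K) := by
        rw [mul_pow]
        congr 1
        rw [show 4 * K = 2 * (2 * K) by ring, pow_mul, Real.sq_sqrt hτ0.le]
      have hexp_eq : -(δ * Real.sqrt τ) / 8 = -t := by rw [htdef]; ring
      rw [hexp_eq]
      calc Real.exp (-t) ≤ (Nat.factorial (4 * K) : ℝ) / t ^ (4 * K) := h1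
        _ ≤ (Nat.factorial (4 * K) : ℝ) * (128 * Real.sqrt τ) ^ (4 * K) := h2
        _ = (Nat.factorial (4 * K) : ℝ) * (128 ^ (4 * K) * τ ^ (2 * K)) := by rw [h3]
        _ = (Nat.factorial (4 * K) : ℝ) * 128 ^ (4 * K) * τ ^ (2 * K) := by ring
    have hQs_le : Qs ≤ (2 * C₀ ^ 2 * ((Nat.factorial (2 * K) : ℝ) * 128 ^ (2 * K) + 1)
        + B₀ ^ 2 * (Nat.factorial (4 * K) : ℝ) * 128 ^ (4 * K)) * τ ^ (2 * K) := by
      rw [hQsdef]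
      have i1 := mul_le_mul_of_nonneg_left hF_le (by positivity : (0:ℝ) ≤ 2 * C₀ ^ 2)
      have i2 := mul_le_mul_of_nonneg_left hR_le (sq_nonneg B₀)
      linarith only [i1, i2]
    calc (∫ x, v x (-τ) ^ 2 * backwardMehler n x (-τ) * gaussDensity n x)
        ≤ (P * Qs) * (Real.pi / (δ / 8)) ^ ((n:ℝ)/2) := hint
      _ = Qs * (P * (Real.pi / (δ / 8)) ^ ((n:ℝ)/2)) := by ring
      _ ≤ Qs * Cn := mul_le_mul_of_nonneg_left hPint hQs0
      _ ≤ ((2 * C₀ ^ 2 * ((Nat.factorial (2 * K) : ℝ) * 128 ^ (2 * K) + 1)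
          + B₀ ^ 2 * (Nat.factorial (4 * K) : ℝ) * 128 ^ (4 * K)) * τ ^ (2 * K)) * Cn :=
          mul_le_mul_of_nonneg_right hQs_le hCnpos.le
      _ = Ca * τ ^ (2 * K) := by rw [hCadef]; ring
      _ ≤ (Ca + Cb) * τ ^ (2 * K) :=
          mul_le_mul_of_nonneg_right (by linarith only [hCb0]) (by positivity)
  · -- big-τ regime
    push_neg at hreg
    have hpt : ∀ x : EuclideanSpace ℝ (Fin n),
        v x (-τ) ^ 2 * backwardMehler n x (-τ) * gaussDensity n x
        ≤ (P * B₀ ^ 2) * Real.exp (-(δ / 8 * ‖x‖ ^ 2)) := by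
      intro x
      rw [hf_eq x]
      have hr0 : (0:ℝ) ≤ ‖x‖ ^ 2 := by positivity
      have hmem : -τ ∈ Set.Icc (-(1 / 2 * min L T₁)) 0 :=
        ⟨by linarith only [hτT0], by linarith only [hτ0]⟩
      have hv := hgrowth x (-τ) hmem
      have h2A : 2 * A ≤ δ / 4 := by linarith only [hδA, hπ, hA]
      have h := aux_ptwise_big hδpos hr0 hB.le h2A hv
      have key : v x (-τ) ^ 2 * (Real.exp (-(δ * ‖x‖ ^ 2) / 2) * Real.exp (-‖x‖ ^ 2 / 2))
          ≤ B₀ ^ 2 * Real.exp (-(δ / 8 * ‖x‖ ^ 2)) := by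
        refine h.trans ?_
        have he1 : Real.exp (-(δ / 8 * ‖x‖ ^ 2)) ≤ 1 := by
          apply Real.exp_le_one_iff.mpr
          exact neg_nonpos.mpr (by positivity)
        have he0 : (0:ℝ) < Real.exp (-(δ / 8 * ‖x‖ ^ 2)) := Real.exp_pos _
        linarith only [mul_le_mul_of_nonneg_left he1 (mul_nonneg (sq_nonneg B₀) he0.le)]
      calc (v x (-τ) ^ 2 * (Real.exp (-(δ * ‖x‖ ^ 2) / 2) * Real.exp (-‖x‖ ^ 2 / 2))) * P
          ≤ (B₀ ^ 2 * Real.exp (-(δ / 8 * ‖x‖ ^ 2))) * P := mul_le_mul_of_nonneg_right key hPpos.le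
        _ = (P * B₀ ^ 2) * Real.exp (-(δ / 8 * ‖x‖ ^ 2)) := by ring
    have hint := aux_integral_le n (c := δ / 8) (by positivity)
      (mul_nonneg hPpos.le (sq_nonneg B₀)) _ hf0 hpt
    have hs1 : Real.sqrt τ ≤ 1 := Real.sqrt_le_one.mpr hτ1
    have hτ_sqrt : τ ≤ Real.sqrt τ := by
      linarith only [mul_le_mul_of_nonneg_left hs1 hst.le, hsq]
    have hT₁2 : T₁ / 2 < Real.sqrt τ := by linarith only [hreg, hτ_sqrt]
    have hT₁τ : T₁ ^ 2 < 4 * τ := by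
      nlinarith only [mul_lt_mul' hT₁2.le hT₁2
        (by linarith only [hT₁] : (0:ℝ) ≤ T₁ / 2) hst, hsq]
    have h9 : 1 ≤ (4 / T₁ ^ 2 * τ) ^ (2 * K) := by
      have h0 : (1:ℝ) ≤ 4 / T₁ ^ 2 * τ := by
        rw [div_mul_eq_mul_div, le_div_iff₀ (by positivity)]
        linarith only [hT₁τ]
      calc (1:ℝ) = 1 ^ (2 * K) := (one_pow _).symm
        _ ≤ (4 / T₁ ^ 2 * τ) ^ (2 * K) := pow_le_pow_left₀ zero_le_one h0 _
    calc (∫ x, v x (-τ) ^ 2 * backwardMehler n x (-τ) * gaussDensity n x)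
        ≤ (P * B₀ ^ 2) * (Real.pi / (δ / 8)) ^ ((n:ℝ)/2) := hint
      _ = B₀ ^ 2 * (P * (Real.pi / (δ / 8)) ^ ((n:ℝ)/2)) := by ring
      _ ≤ B₀ ^ 2 * Cn := mul_le_mul_of_nonneg_left hPint (sq_nonneg B₀)
      _ = B₀ ^ 2 * Cn * 1 := by ring
      _ ≤ B₀ ^ 2 * Cn * ((4 / T₁ ^ 2 * τ) ^ (2 * K)) :=
          mul_le_mul_of_nonneg_left h9 (by positivity)
      _ = Cb * τ ^ (2 * K) := by rw [hCbdef, mul_pow]; ring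
      _ ≤ (Ca + Cb) * τ ^ (2 * K) :=
          mul_le_mul_of_nonneg_right (by linarith only [hCa0]) (by positivity)
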